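/- For all integers $j \geq 2$, $\mathbf{g}_2(j) + \mathbf{g}_3(j,2) > 0$ and $\mathbf{g}_2(j) - \mathbf{g}_3(j,2) > 0$, hence $\mathbf{g}_2^2(j) - \mathbf{g}_3^2(j,2) > 0$, where $\mathbf{g}_2(j) = \sum_{k=1}^{j}\mathbf{f}\left(\frac{2k-1}{j}\pi\right)$ and $\mathbf{g}_3(j,2) = \sum_{k=1}^{j}\mathbf{f}\left(\frac{2k-1}{j}\pi\right)\cos\frac{2k-1}{j}\pi$, with $\mathbf{f}(\varphi) = \frac{3+\cos\varphi}{16|\sin(\varphi/2)|^3} + \cos\varphi$. -/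

import Mathlib

open Real Finset

noncomputable def fbold (φ : ℝ) : ℝ :=
  (3 + Real.cos φ) / (16 * |Real.sin (φ / 2)| ^ 3) + Real.cos φ

noncomputable def g2 (j : ℕ) : ℝ :=
  ∑ k ∈ Finset.Icc 1 j, fbold ((2 * k - 1 : ℝ) / j * π)

noncomputable def g3two (j : ℕ) : ℝ :=
  ∑ k ∈ Finset.Icc 1 j, fbold ((2 * k - 1 : ℝ) / j * π) * Real.cos ((2 * k - 1 : ℝ) / j * π)


private lemma telescope_cos (θ : ℝ) (n : ℕ) :
    2 * Real.sin θ * ∑ k ∈ Finset.range n, Real.cos ((2 * (k : ℝ) + 1) * θ)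
      = Real.sin (2 * (n : ℝ) * θ) := by
  have h := Finset.sum_range_sub (fun k : ℕ => Real.sin (2 * (k : ℝ) * θ)) n
  calc 2 * Real.sin θ * ∑ k ∈ Finset.range n, Real.cos ((2 * (k : ℝ) + 1) * θ)
      = ∑ k ∈ Finset.range n,
          (Real.sin (2 * ((k : ℝ) + 1) * θ) - Real.sin (2 * (k : ℝ) * θ)) := by
        rw [Finset.mul_sum]
        refine Finset.sum_congr rfl fun k _ => ?_
        rw [Real.sin_sub_sin]
        ring_nf
    _ = Real.sin (2 * (n : ℝ) * θ) := by
        simp only [Nat.cast_add, Nat.cast_one] at h ⊢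
        rw [h]
        norm_num

private lemma sum_cos_odd (j : ℕ) (hj : 2 ≤ j) :
    ∑ k ∈ Finset.Icc 1 j, Real.cos ((2 * (k : ℝ) - 1) / j * π) = 0 := by
  have hj0 : (j : ℝ) ≠ 0 := by positivity
  have hre : ∑ k ∈ Finset.Icc 1 j, Real.cos ((2 * (k : ℝ) - 1) / j * π)
      = ∑ k ∈ Finset.range j, Real.cos ((2 * (k : ℝ) + 1) * (π / j)) := by
    rw [← Finset.Ico_add_one_right_eq_Icc, Finset.sum_Ico_eq_sum_range]
    refine Finset.sum_congr (by norm_num) fun k _ => ?_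
    congr 1
    push_cast
    rw [mul_comm (2 * (k : ℝ) + 1) (π / (j : ℝ)), div_mul_eq_mul_div, div_mul_eq_mul_div,
      mul_comm]
    ring_nf
  have hθ : Real.sin (π / j) ≠ 0 := by
    refine ne_of_gt (Real.sin_pos_of_pos_of_lt_pi (by positivity) ?_)
    have : (1 : ℝ) < j := by exact_mod_cast by omega
    calc π / j < π / 1 := by
          apply div_lt_div_of_pos_left Real.pi_pos (by norm_num) this
      _ = π := by norm_num
  have h2 := telescope_cos (π / j) j
  have harg : 2 * (j : ℝ) * (π / j) = 2 * π := by field_simp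
  rw [harg] at h2
  have hz : Real.sin (2 * π) = 0 := Real.sin_two_pi
  rw [hre]
  have := h2.trans hz
  rcases mul_eq_zero.mp this with h | h
  · exact absurd h (by simpa using hθ)
  · exact h

private lemma sum_cos_two (j : ℕ) (hj : 3 ≤ j) :
    ∑ k ∈ Finset.Icc 1 j, Real.cos (2 * ((2 * (k : ℝ) - 1) / j * π)) = 0 := by
  have hj0 : (j : ℝ) ≠ 0 := by positivity
  have hre : ∑ k ∈ Finset.Icc 1 j, Real.cos (2 * ((2 * (k : ℝ) - 1) / j * π))
      = ∑ k ∈ Finset.range j, Real.cos ((2 * (k : ℝ) + 1) * (2 * π / j)) := by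
    rw [← Finset.Ico_add_one_right_eq_Icc, Finset.sum_Ico_eq_sum_range]
    refine Finset.sum_congr (by norm_num) fun k _ => ?_
    congr 1
    push_cast
    rw [mul_comm (2 * (k : ℝ) + 1) (2 * π / (j : ℝ)), div_mul_eq_mul_div, div_mul_eq_mul_div]
    ring_nf
  have hθ : Real.sin (2 * π / j) ≠ 0 := by
    refine ne_of_gt (Real.sin_pos_of_pos_of_lt_pi (by positivity) ?_)
    have h2j : (2 : ℝ) < j := by exact_mod_cast by omega
    rw [div_lt_iff₀ (by positivity)]
    nlinarith [Real.pi_pos]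
  have h2 := telescope_cos (2 * π / j) j
  have harg : 2 * (j : ℝ) * (2 * π / j) = 2 * (2 * π) := by field_simp
  rw [harg] at h2
  have hz : Real.sin (2 * (2 * π)) = 0 := by
    rw [show (2 : ℝ) * (2 * π) = 2 * π + 2 * π by ring, Real.sin_add, Real.sin_two_pi,
      Real.cos_two_pi]
    ring
  rw [hre]
  have := h2.trans hz
  rcases mul_eq_zero.mp this with h | h
  · exact absurd h (by simpa using hθ)
  · exact h

private lemma fbold_ids (φ : ℝ) (h0 : 0 < φ) (h2 : φ < 2 * π) :
    fbold φ * (1 - Real.cos φ)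
        = (1 / (2 * Real.sin (φ / 2)) - Real.sin (φ / 2) / 4)
          + (Real.cos φ - Real.cos φ ^ 2)
    ∧ fbold φ * (1 + Real.cos φ)
        = (1 / Real.sin (φ / 2) ^ 2 - 1)
            * (1 / (2 * Real.sin (φ / 2)) - Real.sin (φ / 2) / 4)
          + (Real.cos φ + Real.cos φ ^ 2) := by
  have hs : 0 < Real.sin (φ / 2) :=
    Real.sin_pos_of_pos_of_lt_pi (by linarith) (by linarith)
  have habs : |Real.sin (φ / 2)| = Real.sin (φ / 2) := abs_of_pos hs
  have hcos : Real.cos φ = 1 - 2 * Real.sin (φ / 2) ^ 2 := by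
    have e : Real.cos φ = Real.cos (2 * (φ / 2)) := by congr 1; ring
    rw [e, Real.cos_two_mul]
    have := Real.sin_sq_add_cos_sq (φ / 2)
    linarith
  have hsne : Real.sin (φ / 2) ≠ 0 := ne_of_gt hs
  constructor <;> (unfold fbold; rw [habs, hcos]; field_simp; ring)

set_option maxHeartbeats 2000000 in
theorem g2_sq_sub_g3_sq_pos (j : ℕ) (hj : 2 ≤ j) :
    0 < g2 j + g3two j ∧ 0 < g2 j - g3two j ∧ 0 < g2 j ^ 2 - g3two j ^ 2 := by
  rcases eq_or_ne j 2 with hj2 | hjne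
  · -- case j = 2
    subst hj2
    have hicc : Finset.Icc 1 2 = ({1, 2} : Finset ℕ) := rfl
    have hφ1 : (2 * ((1 : ℕ) : ℝ) - 1) / ((2 : ℕ) : ℝ) * π = π / 2 := by push_cast; ring
    have hφ2 : (2 * ((2 : ℕ) : ℝ) - 1) / ((2 : ℕ) : ℝ) * π = 3 / 2 * π := by push_cast; ring
    have hc1 : Real.cos (π / 2) = 0 := Real.cos_pi_div_two
    have hc2 : Real.cos (3 / 2 * π) = 0 := by
      rw [show (3 / 2 * π : ℝ) = π + π / 2 by ring, Real.cos_add, Real.cos_pi, Real.sin_pi,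
        Real.cos_pi_div_two]
      ring
    have hs1 : 0 < Real.sin (π / 2 / 2) :=
      Real.sin_pos_of_pos_of_lt_pi (by positivity) (by nlinarith [Real.pi_pos])
    have hs2 : 0 < Real.sin (3 / 2 * π / 2) :=
      Real.sin_pos_of_pos_of_lt_pi (by positivity) (by nlinarith [Real.pi_pos])
    have hf1 : 0 < fbold (π / 2) := by
      unfold fbold
      rw [hc1, abs_of_pos hs1]
      have : 0 < 16 * Real.sin (π / 2 / 2) ^ 3 := by positivity
      have := div_pos (show (0:ℝ) < 3 + 0 by norm_num) this
      linarith
    have hf2 : 0 < fbold (3 / 2 * π) := by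
      unfold fbold
      rw [hc2, abs_of_pos hs2]
      have : 0 < 16 * Real.sin (3 / 2 * π / 2) ^ 3 := by positivity
      have := div_pos (show (0:ℝ) < 3 + 0 by norm_num) this
      linarith
    have hg2 : 0 < g2 2 := by
      unfold g2
      rw [hicc, Finset.sum_pair (by norm_num), hφ1, hφ2]
      linarith
    have hg3 : g3two 2 = 0 := by
      unfold g3two
      rw [hicc, Finset.sum_pair (by norm_num), hφ1, hφ2, hc1, hc2]
      ring
    refine ⟨by linarith [hg3, hg2], by linarith [hg3, hg2], ?_⟩
    rw [hg3]
    have := pow_pos hg2 2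
    nlinarith
  · -- case j ≥ 3
    have hj3 : 3 ≤ j := by omega
    have hj0 : (j : ℝ) ≠ 0 := by positivity
    have hjpos : (0 : ℝ) < j := by positivity
    set s : ℕ → ℝ := fun k => Real.sin ((2 * (k : ℝ) - 1) / j * π / 2) with hs_def
    -- basic facts about each angle
    have hφ : ∀ k ∈ Finset.Icc 1 j, 0 < (2 * (k : ℝ) - 1) / j * π
        ∧ (2 * (k : ℝ) - 1) / j * π < 2 * π := by
      intro k hk
      simp only [Finset.mem_Icc] at hk
      have hk1 : (1 : ℝ) ≤ k := by exact_mod_cast hk.1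
      have hkj : (k : ℝ) ≤ j := by exact_mod_cast hk.2
      constructor
      · have : 0 < (2 * (k : ℝ) - 1) / j := by
          apply div_pos (by linarith) hjpos
        exact mul_pos this Real.pi_pos
      · have h1 : (2 * (k : ℝ) - 1) / j < 2 := by
          rw [div_lt_iff₀ hjpos]; linarith
        exact mul_lt_mul_of_pos_right h1 Real.pi_pos
    have hspos : ∀ k ∈ Finset.Icc 1 j, 0 < s k := by
      intro k hk
      obtain ⟨h1, h2⟩ := hφ k hk
      exact Real.sin_pos_of_pos_of_lt_pi (by linarith) (by linarith)
    have hsle : ∀ k, s k ≤ 1 := fun k => Real.sin_le_one _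
    -- key termwise bound : 1/4 ≤ 1/(2 s) - s/4
    have hT : ∀ k ∈ Finset.Icc 1 j, 1 / 4 ≤ 1 / (2 * s k) - s k / 4 := by
      intro k hk
      have h0 := hspos k hk
      have h1 := hsle k
      have h2 : (1 : ℝ) / 2 ≤ 1 / (2 * s k) := by
        rw [div_le_div_iff₀ (by norm_num) (by positivity)]
        nlinarith
      linarith
    -- sums of cos and cos²
    have hA : ∑ k ∈ Finset.Icc 1 j, Real.cos ((2 * (k : ℝ) - 1) / j * π) = 0 :=
      sum_cos_odd j hj
    have hB : ∑ k ∈ Finset.Icc 1 j, Real.cos ((2 * (k : ℝ) - 1) / j * π) ^ 2 = j / 2 := by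
      have : ∀ k ∈ Finset.Icc 1 j, Real.cos ((2 * (k : ℝ) - 1) / j * π) ^ 2
          = 1 / 2 + Real.cos (2 * ((2 * (k : ℝ) - 1) / j * π)) / 2 := fun k _ =>
        Real.cos_sq _
      rw [Finset.sum_congr rfl this, Finset.sum_add_distrib, Finset.sum_const,
        Nat.card_Icc]
      have h2 := sum_cos_two j hj3
      rw [← Finset.sum_div, h2]
      simp
      ring
    -- main sum identities
    have e1 : g2 j - g3two j
        = (∑ k ∈ Finset.Icc 1 j, (1 / (2 * s k) - s k / 4)) - j / 2 := by
      unfold g2 g3two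
      rw [← Finset.sum_sub_distrib]
      have : ∀ k ∈ Finset.Icc 1 j,
          fbold ((2 * (k : ℝ) - 1) / j * π)
            - fbold ((2 * (k : ℝ) - 1) / j * π) * Real.cos ((2 * (k : ℝ) - 1) / j * π)
          = (1 / (2 * s k) - s k / 4)
            + (Real.cos ((2 * (k : ℝ) - 1) / j * π)
              - Real.cos ((2 * (k : ℝ) - 1) / j * π) ^ 2) := by
        intro k hk
        obtain ⟨h1, h2⟩ := hφ k hk
        have := (fbold_ids _ h1 h2).1
        rw [hs_def]
        simp only []
        linarith [this, mul_one_sub (fbold ((2 * (k : ℝ) - 1) / j * π))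
          (Real.cos ((2 * (k : ℝ) - 1) / j * π))]
      rw [Finset.sum_congr rfl this, Finset.sum_add_distrib, Finset.sum_sub_distrib,
        Finset.sum_sub_distrib, hA, hB]
      ring
    have e2 : g2 j + g3two j
        = (∑ k ∈ Finset.Icc 1 j, (1 / s k ^ 2 - 1) * (1 / (2 * s k) - s k / 4)) + j / 2 := by
      unfold g2 g3two
      rw [← Finset.sum_add_distrib]
      have : ∀ k ∈ Finset.Icc 1 j,
          fbold ((2 * (k : ℝ) - 1) / j * π)
            + fbold ((2 * (k : ℝ) - 1) / j * π) * Real.cos ((2 * (k : ℝ) - 1) / j * π)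
          = (1 / s k ^ 2 - 1) * (1 / (2 * s k) - s k / 4)
            + (Real.cos ((2 * (k : ℝ) - 1) / j * π)
              + Real.cos ((2 * (k : ℝ) - 1) / j * π) ^ 2) := by
        intro k hk
        obtain ⟨h1, h2⟩ := hφ k hk
        have := (fbold_ids _ h1 h2).2
        rw [hs_def]
        simp only []
        linarith [this, mul_one_add (fbold ((2 * (k : ℝ) - 1) / j * π))
          (Real.cos ((2 * (k : ℝ) - 1) / j * π))]
      rw [Finset.sum_congr rfl this, Finset.sum_add_distrib, Finset.sum_add_distrib, hA, hB]
      ring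
    -- positivity of g2 + g3
    have hsum_pos : 0 < g2 j + g3two j := by
      rw [e2]
      have hnn : ∀ k ∈ Finset.Icc 1 j,
          0 ≤ (1 / s k ^ 2 - 1) * (1 / (2 * s k) - s k / 4) := by
        intro k hk
        have h0 := hspos k hk
        have h1 := hsle k
        have hsq : s k ^ 2 ≤ 1 := by nlinarith
        have hge : (1 : ℝ) ≤ 1 / s k ^ 2 := by
          rw [le_div_iff₀ (by positivity)]; linarith
        have := hT k hk
        nlinarith
      have := Finset.sum_nonneg hnn
      have : (0:ℝ) < (j : ℝ) / 2 := by positivity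
      linarith [Finset.sum_nonneg hnn]
    -- lower bound for the end terms
    have hendpoint : ∀ k ∈ Finset.Icc 1 j, s k = Real.sin (π / (2 * j)) →
        (j : ℝ) / (63 / 20 : ℝ) - 1 / 2 ≤ 1 / (2 * s k) - s k / 4 - 1 / 4 := by
      intro k hk hs_eq
      have h0 := hspos k hk
      have h1 := hsle k
      have hsin_le : s k ≤ π / (2 * j) := by
        rw [hs_eq]
        exact Real.sin_le (by positivity)
      have hgeπ : (j : ℝ) / π ≤ 1 / (2 * s k) := by
        rw [div_le_div_iff₀ Real.pi_pos (by positivity)]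
        have e : 2 * (j : ℝ) * (π / (2 * j)) = π := by field_simp
        nlinarith [mul_le_mul_of_nonneg_left hsin_le hjpos.le, e]
      have hge315 : (j : ℝ) / (63 / 20 : ℝ) ≤ (j : ℝ) / π := by
        apply div_le_div_of_nonneg_left (by positivity) Real.pi_pos
        have h := Real.pi_lt_d2
        norm_num at h ⊢
        linarith
      linarith
    have harg1 : (2 * ((1 : ℕ) : ℝ) - 1) / (j : ℝ) * π / 2 = π / (2 * j) := by
      push_cast; field_simp; ring
    have hs1eq : s 1 = Real.sin (π / (2 * j)) := by
      rw [hs_def]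
      simp only
      rw [harg1]
    have hsjeq : s j = Real.sin (π / (2 * j)) := by
      rw [hs_def]
      simp only []
      rw [show (2 * (j : ℝ) - 1) / j * π / 2 = π - π / (2 * j) by field_simp,
        Real.sin_pi_sub]
    -- bound the main sum
    have h1mem : (1 : ℕ) ∈ Finset.Icc 1 j := by simp; omega
    have hjmem : j ∈ Finset.Icc 1 j := by simp; omega
    have hsub : ({1, j} : Finset ℕ) ⊆ Finset.Icc 1 j := by
      intro x hx
      simp only [Finset.mem_insert, Finset.mem_singleton] at hx
      rcases hx with h | h <;> subst h <;> assumption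
    have hbound : (2 : ℝ) * ((j : ℝ) / (63 / 20 : ℝ) - 1 / 2)
        ≤ ∑ k ∈ Finset.Icc 1 j, (1 / (2 * s k) - s k / 4 - 1 / 4) := by
      have hstep : ∑ k ∈ ({1, j} : Finset ℕ), (1 / (2 * s k) - s k / 4 - 1 / 4)
          ≤ ∑ k ∈ Finset.Icc 1 j, (1 / (2 * s k) - s k / 4 - 1 / 4) := by
        apply Finset.sum_le_sum_of_subset_of_nonneg hsub
        intro i hi _
        have := hT i hi
        linarith
      rw [Finset.sum_pair (show (1 : ℕ) ≠ j by omega)] at hstep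
      have hb1 := hendpoint 1 h1mem hs1eq
      have hbj := hendpoint j hjmem hsjeq
      linarith
    have hsum_split : ∑ k ∈ Finset.Icc 1 j, (1 / (2 * s k) - s k / 4 - 1 / 4)
        = (∑ k ∈ Finset.Icc 1 j, (1 / (2 * s k) - s k / 4)) - j / 4 := by
      rw [Finset.sum_sub_distrib, Finset.sum_const, Nat.card_Icc]
      simp only [Nat.add_sub_cancel, nsmul_eq_mul]
      ring
    have hdiff_pos : 0 < g2 j - g3two j := by
      rw [e1]
      rw [hsum_split] at hbound
      have hj3' : (3 : ℝ) ≤ j := by exact_mod_cast hj3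
      have : (j : ℝ) / 2 < (j : ℝ) / 4 + 2 * ((j : ℝ) / (63 / 20 : ℝ) - 1 / 2) := by
        nlinarith
      linarith
    exact ⟨hsum_pos, hdiff_pos, by rw [sq_sub_sq]; exact mul_pos hsum_pos hdiff_pos⟩
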